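/- Let C be closed and convex, x ∈ C a nonstationary point of min{f(y) : y ∈ C}, α > 0, ζ ∈ (0,1], z(α) = x − αD⁻¹∇f(x), and w(α) ∈ 𝒫_{C,ζ}^D(x, z(α)). Then ⟨∇f(x), w(α) − x⟩ < 0, i.e., w(α) − x is a descent direction for f at x. -/

import Mathlib

open RealInnerProductSpace

abbrev EucSp (n : ℕ) := EuclideanSpace ℝ (Fin n)

noncomputable def dipr {n : ℕ} (D : Matrix (Fin n) (Fin n) ℝ) (x y : EucSp n) : ℝ :=
  ⟪(Matrix.toEuclideanLin D) x, y⟫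

noncomputable def dnorm {n : ℕ} (D : Matrix (Fin n) (Fin n) ℝ) (x : EucSp n) : ℝ :=
  Real.sqrt (dipr D x x)

/-- `p` is the exact projection of `v` onto `C` in the `D`-norm. -/
def IsDProj {n : ℕ} (D : Matrix (Fin n) (Fin n) ℝ) (C : Set (EucSp n)) (v p : EucSp n) : Prop :=
  p ∈ C ∧ ∀ z ∈ C, dnorm D (p - v) ≤ dnorm D (z - v)

open Matrix in
lemma dipr_eq {n : ℕ} (D : Matrix (Fin n) (Fin n) ℝ) (u v : EucSp n) :
    dipr D u v = dotProduct (D *ᵥ (WithLp.equiv 2 (Fin n → ℝ) u)) (WithLp.equiv 2 (Fin n → ℝ) v) := by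
  simp [dipr, Matrix.toEuclideanLin_apply, PiLp.inner_apply, dotProduct, mul_comm]

lemma dipr_nonneg {n : ℕ} {D : Matrix (Fin n) (Fin n) ℝ} (hD : D.PosDef) (v : EucSp n) :
    0 ≤ dipr D v v := by
  have := hD.posSemidef.dotProduct_mulVec_nonneg (WithLp.equiv 2 (Fin n → ℝ) v)
  rw [dipr_eq]
  rwa [star_trivial, dotProduct_comm] at this

lemma dipr_symm {n : ℕ} {D : Matrix (Fin n) (Fin n) ℝ} (hD : D.IsHermitian) (u v : EucSp n) :
    dipr D u v = dipr D v u := by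
  rw [dipr_eq, dipr_eq, dotProduct_comm, Matrix.dotProduct_mulVec,
    ← Matrix.mulVec_transpose]
  rw [← Matrix.conjTranspose_eq_transpose_of_trivial, hD.eq]

lemma dnorm_sq {n : ℕ} {D : Matrix (Fin n) (Fin n) ℝ} (hD : D.PosDef) (v : EucSp n) :
    dnorm D v ^ 2 = dipr D v v :=
  Real.sq_sqrt (dipr_nonneg hD v)

lemma dipr_add_add {n : ℕ} {D : Matrix (Fin n) (Fin n) ℝ} (hD : D.PosDef) (a b : EucSp n) :
    dipr D (a + b) (a + b) = dipr D a a + 2 * dipr D a b + dipr D b b := by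
  have h := dipr_symm hD.1 b a
  simp only [dipr, map_add, inner_add_left, inner_add_right] at *
  ring_nf
  rw [← h]; ring

lemma dipr_cancel {n : ℕ} {D : Matrix (Fin n) (Fin n) ℝ} (hD : D.PosDef)
    (t : ℝ) (u v : EucSp n) :
    dipr D (t • (Matrix.toEuclideanLin D⁻¹) u) v = t * ⟪u, v⟫ := by
  have key : (Matrix.toEuclideanLin D) ((Matrix.toEuclideanLin D⁻¹) u) = u := by
    simp [Matrix.toEuclideanLin_apply, Matrix.mulVec_mulVec,
      Matrix.mul_nonsing_inv D hD.det_pos.ne'.isUnit]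
  rw [dipr, map_smul, inner_smul_left, key]
  simp

set_option maxHeartbeats 1000000 in
theorem stmt11 {n : ℕ} (C : Set (EucSp n)) (hcl : IsClosed C) (hconv : Convex ℝ C)
    (D : Matrix (Fin n) (Fin n) ℝ) (hD : D.PosDef)
    (f : EucSp n → ℝ) (g : EucSp n → EucSp n) (hf : ∀ x, HasGradientAt f (g x) x)
    (x : EucSp n) (hx : x ∈ C) (hnonstat : ¬ ∀ y ∈ C, 0 ≤ ⟪g x, y - x⟫)
    (α : ℝ) (hα : 0 < α) (ζ : ℝ) (hζ : 0 < ζ ∧ ζ ≤ 1)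
    (z : EucSp n) (hz : z = x - α • (Matrix.toEuclideanLin D⁻¹) (g x))
    (p : EucSp n) (hp : IsDProj D C z p)
    (w : EucSp n) (hwC : w ∈ C)
    (hw : (dnorm D (w - z)) ^ 2 ≤
      ζ * (dnorm D (p - z)) ^ 2 + (1 - ζ) * (dnorm D (x - z)) ^ 2) :
    ⟪g x, w - x⟫ < 0 := by
  push_neg at hnonstat
  obtain ⟨y, hyC, hylt⟩ := hnonstat
  have hxz : x - z = α • (Matrix.toEuclideanLin D⁻¹) (g x) := by rw [hz]; abel
  -- expansion for any vector d: Q(d + (x-z)) = Q d + 2α⟨g x, d⟩ + Q(x-z)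
  have expand : ∀ d : EucSp n,
      dipr D (d + (x - z)) (d + (x - z)) =
        dipr D d d + 2 * (α * ⟪g x, d⟫) + dipr D (x - z) (x - z) := by
    intro d
    rw [dipr_add_add hD, dipr_symm hD.1 d (x - z), hxz, dipr_cancel hD]
  -- strict inequality for the projection
  set b : ℝ := 2 * (α * ⟪g x, y - x⟫) with hb
  have hbneg : b < 0 := by
    have := mul_neg_of_pos_of_neg hα hylt
    nlinarith
  set c : ℝ := dipr D (y - x) (y - x) with hc
  have hc0 : 0 ≤ c := dipr_nonneg hD _
  set t : ℝ := min 1 (-b / (c + 1)) with ht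
  have ht0 : 0 < t := lt_min one_pos (div_pos (neg_pos.2 hbneg) (by linarith))
  have ht1 : t ≤ 1 := min_le_left _ _
  have htc : t * c + b < 0 := by
    have h1 : t ≤ -b / (c + 1) := min_le_right _ _
    have h2 : t * c ≤ (-b / (c + 1)) * c :=
      mul_le_mul_of_nonneg_right h1 hc0
    have h3 : (-b / (c + 1)) * c < -b := by
      rw [div_mul_eq_mul_div, div_lt_iff₀ (by linarith)]
      nlinarith [neg_pos.2 hbneg]
    linarith
  set xt : EucSp n := x + t • (y - x) with hxt
  have hxtC : xt ∈ C := by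
    have := hconv hx hyC (by linarith : (0:ℝ) ≤ 1 - t) ht0.le (by ring)
    convert this using 1
    rw [hxt]
    module
  have hQxt : dipr D (xt - z) (xt - z) < dipr D (x - z) (x - z) := by
    have h1 : xt - z = t • (y - x) + (x - z) := by rw [hxt]; abel
    rw [h1, expand]
    have h2 : dipr D (t • (y - x)) (t • (y - x)) = t ^ 2 * c := by
      rw [hc, dipr]
      rw [map_smul, inner_smul_left, inner_smul_right]
      simp [dipr]; ring
    have h3 : ⟪g x, t • (y - x)⟫ = t * ⟪g x, y - x⟫ := real_inner_smul_right _ _ _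
    rw [h2, h3]
    nlinarith
  have hpQ : dipr D (p - z) (p - z) < dipr D (x - z) (x - z) := by
    have h1 := hp.2 xt hxtC
    have h2 : dnorm D (p - z) ^ 2 ≤ dnorm D (xt - z) ^ 2 :=
      pow_le_pow_left₀ (Real.sqrt_nonneg _) h1 2
    rw [dnorm_sq hD, dnorm_sq hD] at h2
    linarith
  -- main conclusion
  have hwz : w - z = (w - x) + (x - z) := by abel
  have hmain := hw
  rw [dnorm_sq hD, dnorm_sq hD, dnorm_sq hD, hwz, expand] at hmain
  have hQw : 0 ≤ dipr D (w - x) (w - x) := dipr_nonneg hD _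
  have h5 : ζ * (dipr D (p - z) (p - z) - dipr D (x - z) (x - z)) < 0 :=
    mul_neg_of_pos_of_neg hζ.1 (by linarith)
  have h6 : 2 * (α * ⟪g x, w - x⟫) < 0 := by nlinarith
  by_contra h
  push_neg at h
  nlinarith
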